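/- Let K and L be compact Hausdorff spaces, let m > 0, and let T : C(K) → C(L) be a linear map with m·‖g‖ ≤ ‖Tg‖ ≤ ‖g‖ for all g ∈ C(K). Let (ν_y)_{y∈L} be a family of regular finite signed Borel measures on K representing T*. Fix x ∈ K and let μ be a regular finite signed Borel measure on L such that ∫_L (Tg) dμ = g(x) for all g ∈ C(K) and ‖μ‖ = sup{∫_L (Tg) dμ : g ∈ C(K), ‖Tg‖ ≤ 1} (that is, μ is a norm-preserving Hahn–Banach extension of the functional Tg ↦ g(x) defined on T[C(K)]). Then |μ|({y ∈ L : ‖ν_y‖ < m}) = 0; in other words, ‖ν_y‖ ≥ m for μ-almost all y ∈ L. -/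

import Mathlib

open MeasureTheory

/-- Integral of a real function against a signed measure, via the Jordan decomposition. -/
noncomputable def sInteg {X : Type*} [MeasurableSpace X] (μ : SignedMeasure X) (g : X → ℝ) : ℝ :=
  ∫ x, g x ∂μ.toJordanDecomposition.posPart - ∫ x, g x ∂μ.toJordanDecomposition.negPart

/-- The total-variation norm of a signed measure. -/
noncomputable def vnorm {X : Type*} [MeasurableSpace X] (μ : SignedMeasure X) : ℝ :=
  (μ.totalVariation Set.univ).toReal

lemma totalVariation_isFiniteMeasure {X : Type*} [MeasurableSpace X] (μ : SignedMeasure X) :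
    IsFiniteMeasure μ.totalVariation := by
  unfold SignedMeasure.totalVariation; infer_instance

lemma vnorm_nonneg {X : Type*} [MeasurableSpace X] (μ : SignedMeasure X) : 0 ≤ vnorm μ :=
  ENNReal.toReal_nonneg

section aux

variable {X : Type*} [TopologicalSpace X] [CompactSpace X] [T2Space X]
  [MeasurableSpace X] [BorelSpace X]

lemma cm_integrable (f : C(X, ℝ)) (π : Measure X) [IsFiniteMeasure π] : Integrable (⇑f) π :=
  f.continuous.integrable_of_hasCompactSupport (HasCompactSupport.of_compactSpace _)

lemma abs_sInteg_le (ν : SignedMeasure X) (g : C(X, ℝ)) {C : ℝ}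
    (hC : ∀ z, |g z| ≤ C) : |sInteg ν g| ≤ C * vnorm ν := by
  set p := ν.toJordanDecomposition.posPart
  set n := ν.toJordanDecomposition.negPart
  have h1 : |∫ z, g z ∂p| ≤ C * (p Set.univ).toReal := by
    simpa [Measure.real] using norm_integral_le_of_norm_le_const (μ := p) (f := ⇑g)
      (Filter.Eventually.of_forall fun z => by simpa using hC z)
  have h2 : |∫ z, g z ∂n| ≤ C * (n Set.univ).toReal := by
    simpa [Measure.real] using norm_integral_le_of_norm_le_const (μ := n) (f := ⇑g)
      (Filter.Eventually.of_forall fun z => by simpa using hC z)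
  have htv : vnorm ν = (p Set.univ).toReal + (n Set.univ).toReal := by
    simp [vnorm, SignedMeasure.totalVariation, ENNReal.toReal_add (measure_ne_top _ _)
      (measure_ne_top _ _)]
    rfl
  calc |sInteg ν g| ≤ |∫ z, g z ∂p| + |∫ z, g z ∂n| := abs_sub _ _
    _ ≤ C * (p Set.univ).toReal + C * (n Set.univ).toReal := add_le_add h1 h2
    _ = C * vnorm ν := by rw [htv]; ring

lemma sInteg_le_integ_abs (ν : SignedMeasure X) (g : C(X, ℝ)) :
    sInteg ν g ≤ ∫ z, |g z| ∂ν.totalVariation := by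
  set p := ν.toJordanDecomposition.posPart
  set n := ν.toJordanDecomposition.negPart
  have habs : Continuous fun z => |g z| := g.continuous.abs
  have hip : Integrable (fun z => |g z|) p :=
    habs.integrable_of_hasCompactSupport (HasCompactSupport.of_compactSpace _)
  have hin : Integrable (fun z => |g z|) n :=
    habs.integrable_of_hasCompactSupport (HasCompactSupport.of_compactSpace _)
  have h : ∫ z, |g z| ∂ν.totalVariation = (∫ z, |g z| ∂p) + ∫ z, |g z| ∂n := by
    rw [SignedMeasure.totalVariation, integral_add_measure hip hin]
  rw [h, sInteg]
  have h1 : ∫ z, g z ∂p ≤ ∫ z, |g z| ∂p :=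
    integral_mono (cm_integrable g p) hip fun z => le_abs_self _
  have h2 : -∫ z, |g z| ∂n ≤ ∫ z, g z ∂n := by
    rw [← integral_neg]
    exact integral_mono hin.neg (cm_integrable g n) fun z => neg_abs_le _
  linarith

end aux

/-- If `μ` is a norm-preserving Hahn-Banach extension of the functional `Tg ↦ g(x)` on
`T[C(K)]`, then `‖ν_y‖ ≥ m` for `μ`-almost all `y ∈ L`. -/
theorem stmt2 {K L : Type*}
    [TopologicalSpace K] [CompactSpace K] [T2Space K] [MeasurableSpace K] [BorelSpace K]
    [TopologicalSpace L] [CompactSpace L] [T2Space L] [MeasurableSpace L] [BorelSpace L]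
    (m : ℝ) (hm : 0 < m) (T : C(K, ℝ) →ₗ[ℝ] C(L, ℝ))
    (hT : ∀ g : C(K, ℝ), m * ‖g‖ ≤ ‖T g‖ ∧ ‖T g‖ ≤ ‖g‖)
    (ν : L → SignedMeasure K) (hνreg : ∀ y, (ν y).totalVariation.Regular)
    (hν : ∀ (g : C(K, ℝ)) (y : L), sInteg (ν y) g = T g y)
    (x : K) (μ : SignedMeasure L) (hμreg : μ.totalVariation.Regular)
    (hμ : ∀ g : C(K, ℝ), sInteg μ (T g) = g x)
    (hHB : vnorm μ = ⨆ g : {g : C(K, ℝ) // ‖T g‖ ≤ 1}, sInteg μ (T (g : C(K, ℝ)))) :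
    μ.totalVariation {y : L | vnorm (ν y) < m} = 0 := by
  have : IsFiniteMeasure μ.totalVariation := totalVariation_isFiniteMeasure μ
  -- Key step: for every ε > 0, the set {y | vnorm (ν y) ≤ m - ε} is |μ|-null.
  have key : ∀ ε : ℝ, 0 < ε → μ.totalVariation {y : L | vnorm (ν y) ≤ m - ε} = 0 := by
    intro ε hε
    set A := {y : L | vnorm (ν y) ≤ m - ε} with hA
    by_contra hA0
    set a := (μ.totalVariation A).toReal with ha
    have ha0 : 0 < a := ENNReal.toReal_pos hA0 (measure_ne_top _ _)
    -- every g with ‖T g‖ ≤ 1 satisfies the integral bound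
    have bound : ∀ g : C(K, ℝ), ‖T g‖ ≤ 1 →
        sInteg μ (T g) ≤ vnorm μ - ε / m * a := by
      intro g hg
      have hgnorm : ‖g‖ ≤ 1 / m := by
        have := (hT g).1
        rw [le_div_iff₀ hm]
        linarith
      -- pointwise bound on A
      have hptA : ∀ y ∈ A, |T g y| ≤ 1 - ε / m := by
        intro y hy
        have h1 : |sInteg (ν y) g| ≤ ‖g‖ * vnorm (ν y) :=
          abs_sInteg_le (ν y) g fun z => by
            simpa using g.norm_coe_le_norm z
        have h2 : ‖g‖ * vnorm (ν y) ≤ (1 / m) * (m - ε) :=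
          mul_le_mul hgnorm hy (vnorm_nonneg _) (by positivity)
        have h3 : (1 / m) * (m - ε) = 1 - ε / m := by field_simp
        rw [h3] at h2
        calc |T g y| = |sInteg (ν y) ⇑g| := by rw [hν g y]
          _ ≤ 1 - ε / m := h1.trans h2
      -- pointwise bound everywhere
      have hpt : ∀ y, |T g y| ≤ 1 := fun y =>
        le_trans (by simpa using (T g).norm_coe_le_norm y) hg
      -- the measurable superset of A where |T g| ≤ 1 - ε/m
      set C := {y : L | |T g y| ≤ 1 - ε / m} with hC
      have hCmeas : MeasurableSet C :=
        measurableSet_le ((T g).continuous.abs.measurable) measurable_const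
      have hAC : A ⊆ C := fun y hy => hptA y hy
      have hCa : a ≤ (μ.totalVariation C).toReal :=
        ENNReal.toReal_mono (measure_ne_top _ _) (measure_mono hAC)
      -- split the integral of |T g| over C and Cᶜ
      have hintC : ∫ y in C, |T g y| ∂μ.totalVariation
          ≤ (1 - ε / m) * (μ.totalVariation C).toReal := by
        have := norm_setIntegral_le_of_norm_le_const (μ := μ.totalVariation)
          (s := C) (f := fun y => |T g y|) (C := 1 - ε / m)
          (measure_lt_top _ _) (fun y hy => by have h : |T g y| ≤ 1 - ε / m := hy; simpa using h)
        exact le_trans (le_abs_self _) (by simpa [Measure.real] using this)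
      have hintCc : ∫ y in Cᶜ, |T g y| ∂μ.totalVariation
          ≤ 1 * (μ.totalVariation Cᶜ).toReal := by
        have := norm_setIntegral_le_of_norm_le_const (μ := μ.totalVariation)
          (s := Cᶜ) (f := fun y => |T g y|) (C := 1)
          (measure_lt_top _ _) (fun y _ => by simpa using hpt y)
        exact le_trans (le_abs_self _) (by simpa [Measure.real] using this)
      have hiabs : Integrable (fun y => |T g y|) μ.totalVariation :=
        (T g).continuous.abs.integrable_of_hasCompactSupport
          (HasCompactSupport.of_compactSpace _)
      have hsplit : ∫ y, |T g y| ∂μ.totalVariation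
          = (∫ y in C, |T g y| ∂μ.totalVariation) + ∫ y in Cᶜ, |T g y| ∂μ.totalVariation :=
        (integral_add_compl hCmeas hiabs).symm
      have htot : (μ.totalVariation C).toReal + (μ.totalVariation Cᶜ).toReal = vnorm μ := by
        rw [vnorm, ← measure_add_measure_compl hCmeas,
          ENNReal.toReal_add (measure_ne_top _ _) (measure_ne_top _ _)]
      have hmC : ε / m * a ≤ ε / m * (μ.totalVariation C).toReal :=
        mul_le_mul_of_nonneg_left hCa (by positivity)
      calc sInteg μ (T g) ≤ ∫ y, |T g y| ∂μ.totalVariation := sInteg_le_integ_abs μ (T g)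
        _ ≤ (1 - ε / m) * (μ.totalVariation C).toReal + 1 * (μ.totalVariation Cᶜ).toReal := by
            rw [hsplit]; exact add_le_add hintC hintCc
        _ = ((μ.totalVariation C).toReal + (μ.totalVariation Cᶜ).toReal)
              - ε / m * (μ.totalVariation C).toReal := by ring
        _ ≤ vnorm μ - ε / m * a := by rw [htot]; linarith
    -- contradiction with the Hahn-Banach norm equality
    have hne : Nonempty {g : C(K, ℝ) // ‖T g‖ ≤ 1} := ⟨⟨0, by simp⟩⟩
    have hsup : (⨆ g : {g : C(K, ℝ) // ‖T g‖ ≤ 1}, sInteg μ (T (g : C(K, ℝ))))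
        ≤ vnorm μ - ε / m * a :=
      ciSup_le fun g => bound g g.2
    rw [← hHB] at hsup
    have : 0 < ε / m * a := by positivity
    linarith
  -- conclude via a countable union
  have hsub : {y : L | vnorm (ν y) < m}
      ⊆ ⋃ n : ℕ, {y : L | vnorm (ν y) ≤ m - 1 / (n + 1)} := by
    intro y hy
    have hy' : vnorm (ν y) < m := hy
    obtain ⟨n, hn⟩ := exists_nat_one_div_lt (show 0 < m - vnorm (ν y) by linarith)
    exact Set.mem_iUnion.mpr ⟨n, by simp only [Set.mem_setOf_eq]; push_cast; linarith⟩
  refine measure_mono_null hsub (measure_iUnion_null fun n => key _ ?_)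
  positivity
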